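/- Let Σ be a graded alphabet and L a finite tree language over Σ. Then the sequential subtree automaton A_L is a sequential RWTA that realizes SubTreeSeries_L, i.e. Card(Δ_{A_L}(t)) ≤ 1 and P_{A_L}(t) = SubTreeSeries_L(t) for every tree t ∈ T_Σ. -/

import Mathlib

/-- A tree over a graded alphabet `σ` with arity function `ar`. -/
inductive GTree (σ : Type) (ar : σ → ℕ) : Type
  | node (f : σ) (ts : Fin (ar f) → GTree σ ar) : GTree σ ar

/-- A root-weighted tree automaton (RWTA) over the graded alphabet `σ`
with weights in `M`. -/
structure RWTA (σ : Type) (ar : σ → ℕ) (M : Type) where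
  Q : Type
  fin : Finite Q := by infer_instance
  ν : Q → M
  δ : ∀ f : σ, (Fin (ar f) → Q) → Q → Prop

attribute [instance] RWTA.fin

variable {σ : Type} {ar : σ → ℕ} {M : Type}

/-- The reachability map `Δ_A`. -/
def RWTA.Delta (A : RWTA σ ar M) : GTree σ ar → Set A.Q
  | .node f ts => {q | ∃ qs : Fin (ar f) → A.Q,
      (∀ i, qs i ∈ A.Delta (ts i)) ∧ A.δ f qs q}

/-- The tree series realized by an RWTA: `P_A(t) = ν(Δ_A(t))`. -/
noncomputable def RWTA.P [AddCommMonoid M] (A : RWTA σ ar M) (t : GTree σ ar) : M :=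
  ∑ᶠ q ∈ A.Delta t, A.ν q

/-- An RWTA is sequential when `Card (Δ_A(t)) ≤ 1` for every tree. -/
def RWTA.Sequential (A : RWTA σ ar M) : Prop :=
  ∀ t : GTree σ ar, (A.Delta t).Subsingleton

/-- The down language of a state. -/
def RWTA.DownLang (A : RWTA σ ar M) (q : A.Q) : Set (GTree σ ar) :=
  {t | q ∈ A.Delta t}

/-- The sequential RWTA associated with `A` by the subset construction. -/
noncomputable def RWTA.subset [AddCommMonoid M] (A : RWTA σ ar M) : RWTA σ ar M where
  Q := Set A.Q
  ν := fun S => ∑ᶠ q ∈ S, A.ν q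
  δ := fun f Qs S =>
    S = {q | ∃ qs : Fin (ar f) → A.Q, (∀ i, qs i ∈ Qs i) ∧ A.δ f qs q}

/-- The accessible part of an RWTA. -/
def RWTA.acc (A : RWTA σ ar M) : RWTA σ ar M where
  Q := {q : A.Q // (A.DownLang q).Nonempty}
  ν := fun q => A.ν q.1
  δ := fun f qs q => A.δ f (fun i => (qs i).1) q.1

/-- The sum of two RWTAs (on the disjoint union of the state sets). -/
def RWTA.sum (A₁ A₂ : RWTA σ ar M) : RWTA σ ar M where
  Q := A₁.Q ⊕ A₂.Q
  ν := Sum.elim A₁.ν A₂.ν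
  δ := fun f qs q =>
    (∃ (qs' : Fin (ar f) → A₁.Q) (q' : A₁.Q),
        q = Sum.inl q' ∧ (∀ i, qs i = Sum.inl (qs' i)) ∧ A₁.δ f qs' q') ∨
    (∃ (qs' : Fin (ar f) → A₂.Q) (q' : A₂.Q),
        q = Sum.inr q' ∧ (∀ i, qs i = Sum.inr (qs' i)) ∧ A₂.δ f qs' q')

/-- The product of two RWTAs. -/
def RWTA.prod [Mul M] (A₁ A₂ : RWTA σ ar M) : RWTA σ ar M where
  Q := A₁.Q × A₂.Q
  ν := fun q => A₁.ν q.1 * A₂.ν q.2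
  δ := fun f qs q =>
    A₁.δ f (fun i => (qs i).1) q.1 ∧ A₂.δ f (fun i => (qs i).2) q.2

/-- The quotient of an RWTA by an equivalence relation on its states. -/
noncomputable def RWTA.quot [AddCommMonoid M] (A : RWTA σ ar M) (s : Setoid A.Q) :
    RWTA σ ar M where
  Q := Quotient s
  ν := fun C => ∑ᶠ q ∈ {q : A.Q | Quotient.mk s q = C}, A.ν q
  δ := fun f Cs C => ∃ (qs : Fin (ar f) → A.Q) (q : A.Q),
    (∀ i, Quotient.mk s (qs i) = Cs i) ∧ Quotient.mk s q = C ∧ A.δ f qs q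

/-- Relabelling of trees along a rank-preserving map of symbols. -/
def GTree.map {Γ : Type} {arΓ : Γ → ℕ} (g : σ → Γ) (hg : ∀ f, arΓ (g f) = ar f) :
    GTree σ ar → GTree Γ arΓ
  | .node f ts => .node (g f) (fun i => GTree.map g hg (ts (Fin.cast (hg f) i)))

/-- A morphism of RWTAs. -/
structure RWTA.Morphism {Γ : Type} {arΓ : Γ → ℕ}
    (A₁ : RWTA σ ar M) (A₂ : RWTA Γ arΓ M) where
  stateMap : A₁.Q → A₂.Q
  symMap : σ → Γ
  symRank : ∀ f, arΓ (symMap f) = ar f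
  transMap : ∀ (f : σ) (qs : Fin (ar f) → A₁.Q) (q : A₁.Q), A₁.δ f qs q →
    A₂.δ (symMap f) (fun i => stateMap (qs (Fin.cast (symRank f) i))) (stateMap q)
  weightMap : ∀ q, A₂.ν (stateMap q) = A₁.ν q

/-- Two RWTAs are isomorphic when there are mutually inverse morphisms between them. -/
def RWTA.Isomorphic {Γ : Type} {arΓ : Γ → ℕ}
    (A₁ : RWTA σ ar M) (A₂ : RWTA Γ arΓ M) : Prop :=
  ∃ (μ : A₁.Morphism A₂) (μ' : A₂.Morphism A₁),
    (∀ q, μ'.stateMap (μ.stateMap q) = q) ∧ (∀ q, μ.stateMap (μ'.stateMap q) = q) ∧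
    (∀ f, μ'.symMap (μ.symMap f) = f) ∧ (∀ f, μ.symMap (μ'.symMap f) = f)

/-- The size (number of nodes) of a tree. -/
def GTree.size : GTree σ ar → ℕ
  | .node _ ts => 1 + ∑ i, (ts i).size

/-- The set of subtrees of a tree. -/
def GTree.subTrees : GTree σ ar → Set (GTree σ ar)
  | .node f ts => insert (.node f ts) (⋃ i, (ts i).subTrees)

theorem GTree.subTrees_finite (t : GTree σ ar) : t.subTrees.Finite := by
  induction t with
  | node f ts ih => exact Set.Finite.insert _ (Set.finite_iUnion fun i => ih i)

-- `t.subCount s` is the number of occurrences of `s` as a subtree of `t`,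
-- i.e. `SubTreeSeries_t(s)`.
open Classical in
noncomputable def GTree.subCount : GTree σ ar → GTree σ ar → ℕ
  | .node f ts, s =>
      (if GTree.node f ts = s then 1 else 0) + ∑ i, (ts i).subCount s

/-- Indexing of the symbols of a tree by their position in a prefix traversal
(auxiliary function, threading the position of the root). -/
def GTree.sharpAux : GTree σ ar → ℕ → GTree (σ × ℕ) (fun p => ar p.1)
  | .node f ts, n => .node (f, n) (fun i =>
      (ts i).sharpAux (n + 1 + ∑ j : Fin (ar f), if j.1 < i.1 then (ts j).size else 0))

/-- `t^♯`: the tree `t` with each symbol indexed by its prefix-traversal position. -/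
def GTree.sharp (t : GTree σ ar) : GTree (σ × ℕ) (fun p => ar p.1) := t.sharpAux 0

/-- The map `h` dropping the indexes. -/
def GTree.unsharp : GTree (σ × ℕ) (fun p => ar p.1) → GTree σ ar :=
  GTree.map Prod.fst (fun _ => rfl)

/-- The subtree automaton `A_t` associated with a tree `t`. -/
def subtreeAut (t : GTree σ ar) : RWTA σ ar ℕ where
  Q := {r // r ∈ t.sharp.subTrees}
  fin := (t.sharp.subTrees_finite).to_subtype
  ν := fun _ => 1
  δ := fun f qs q => ∃ n : ℕ,
    (q : GTree (σ × ℕ) (fun p => ar p.1)) = .node (f, n) (fun i => (qs i : GTree (σ × ℕ) (fun p => ar p.1)))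

/-- The equivalence `∼_h` on the states of the subtree automaton. -/
def simH (t : GTree σ ar) : Setoid (subtreeAut t).Q :=
  Setoid.ker (fun r => GTree.unsharp r.1)

/-- The sequential subtree automaton `seq(A_t)` associated with a tree `t`. -/
noncomputable def seqSubtreeAut (t : GTree σ ar) : RWTA σ ar ℕ where
  Q := {r // r ∈ t.subTrees}
  fin := (t.subTrees_finite).to_subtype
  ν := fun r => t.subCount r.1
  δ := fun f qs q => (q : GTree σ ar) = .node f (fun i => (qs i : GTree σ ar))

/-- `SubTreeSet(L)`. -/
def subTreeSet (L : Set (GTree σ ar)) : Set (GTree σ ar) := ⋃ t ∈ L, t.subTrees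

/-- `SubTreeSeries_L`. -/
noncomputable def subSeriesL (L : Set (GTree σ ar)) (s : GTree σ ar) : ℕ :=
  ∑ᶠ t ∈ L, t.subCount s

/-- The sequential subtree automaton `A_L` associated with a finite tree language. -/
noncomputable def langSubtreeAut (L : Set (GTree σ ar)) (hL : L.Finite) : RWTA σ ar ℕ where
  Q := {r // r ∈ subTreeSet L}
  fin := (hL.biUnion fun t _ => t.subTrees_finite).to_subtype
  ν := fun r => subSeriesL L r.1
  δ := fun f qs q => (q : GTree σ ar) = .node f (fun i => (qs i : GTree σ ar))


lemma GTree.self_mem_subTrees (t : GTree σ ar) : t ∈ t.subTrees := by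
  cases t with
  | node f ts => exact Set.mem_insert _ _

lemma GTree.subTrees_trans {t s s' : GTree σ ar}
    (h : s ∈ t.subTrees) (h' : s' ∈ s.subTrees) : s' ∈ t.subTrees := by
  induction t with
  | node f ts ih =>
    rcases h with h | h
    · subst h; exact h'
    · rcases Set.mem_iUnion.mp h with ⟨i, hi⟩
      exact Set.mem_insert_iff.mpr (Or.inr (Set.mem_iUnion.mpr ⟨i, ih i hi⟩))

lemma GTree.child_mem_subTrees (f : σ) (ts : Fin (ar f) → GTree σ ar) (i : Fin (ar f)) :
    ts i ∈ (GTree.node f ts).subTrees :=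
  Set.mem_insert_iff.mpr (Or.inr (Set.mem_iUnion.mpr ⟨i, (ts i).self_mem_subTrees⟩))

lemma GTree.subCount_eq_zero {t s : GTree σ ar} (h : s ∉ t.subTrees) :
    t.subCount s = 0 := by
  induction t with
  | node f ts ih =>
    rw [GTree.subCount]
    have h1 : GTree.node f ts ≠ s := fun he => h (he ▸ (GTree.node f ts).self_mem_subTrees)
    rw [if_neg h1, zero_add]
    refine Finset.sum_eq_zero fun i _ => ih i (fun hi => h ?_)
    exact Set.mem_insert_iff.mpr (Or.inr (Set.mem_iUnion.mpr ⟨i, hi⟩))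

lemma langSubtreeAut_delta_iff {σ : Type} {ar : σ → ℕ}
    (L : Set (GTree σ ar)) (hL : L.Finite) (t : GTree σ ar)
    (q : (langSubtreeAut L hL).Q) :
    q ∈ (langSubtreeAut L hL).Delta t ↔ q.1 = t := by
  induction t generalizing q with
  | node f ts ih =>
    constructor
    · rintro ⟨qs, hqs, hδ⟩
      have : ∀ i, (qs i).1 = ts i := fun i => (ih i (qs i)).mp (hqs i)
      show q.1 = _
      rw [hδ]
      exact congrArg _ (funext fun i => this i)
    · intro hq
      have hmem : ∀ i, ts i ∈ subTreeSet L := by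
        intro i
        rcases Set.mem_iUnion₂.mp q.2 with ⟨t₀, ht₀, hsub⟩
        rw [hq] at hsub
        exact Set.mem_iUnion₂.mpr ⟨t₀, ht₀,
          GTree.subTrees_trans hsub (GTree.child_mem_subTrees f ts i)⟩
      refine ⟨fun i => ⟨ts i, hmem i⟩, fun i => (ih i _).mpr rfl, hq⟩

theorem langSubtreeAut_sequential_realizes {σ : Type} {ar : σ → ℕ}
    (L : Set (GTree σ ar)) (hL : L.Finite) :
    (langSubtreeAut L hL).Sequential ∧
      ∀ t : GTree σ ar, (langSubtreeAut L hL).P t = subSeriesL L t := by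
  constructor
  · intro t q hq q' hq'
    have := (langSubtreeAut_delta_iff L hL t q).mp hq
    have := (langSubtreeAut_delta_iff L hL t q').mp hq'
    exact Subtype.ext (by simp_all)
  · intro t
    rw [RWTA.P]
    by_cases h : t ∈ subTreeSet L
    · have : (langSubtreeAut L hL).Delta t = {⟨t, h⟩} := by
        ext q
        rw [langSubtreeAut_delta_iff]
        exact ⟨fun h' => Subtype.ext h', fun h' => by rw [h']⟩
      rw [this]; refine (finsum_mem_singleton (f := (langSubtreeAut L hL).ν) (a := (⟨t, h⟩ : (langSubtreeAut L hL).Q))).trans ?_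
      rfl
    · have hd : (langSubtreeAut L hL).Delta t = ∅ := by
        ext q
        rw [langSubtreeAut_delta_iff]
        simp only [Set.mem_empty_iff_false, iff_false]
        rintro rfl
        exact h q.2
      rw [hd, finsum_mem_empty]
      rw [subSeriesL]
      refine (finsum_mem_eq_zero_of_forall_eq_zero fun t' ht' => ?_).symm
      refine GTree.subCount_eq_zero fun hm => h ?_
      exact Set.mem_iUnion₂.mpr ⟨t', ht', hm⟩
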